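/- For all integers m ≥ 0 and n ≥ 1, one has ∑_{k=0}^{n} (-1)^k (C(m+k, m) + C(m+k-1, m)) · C(m+2n, n-k) = 0, where C(a,b) denotes the binomial coefficient with the convention C(a,b) = 0 whenever b < 0 or b > a (in particular C(m-1, m) = 0). -/
import Mathlib


/-- Binomial coefficient `C a b` for integers, with the convention that
`C a b = 0` whenever `b < 0` or `b > a`. -/
def intChoose (a b : ℤ) : ℤ :=
  if 0 ≤ b ∧ b ≤ a then (a.toNat.choose b.toNat : ℤ) else 0

lemma intChoose_nat (a b : ℕ) : intChoose a b = (a.choose b : ℤ) := by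
  unfold intChoose
  split_ifs with h
  · simp
  · have hba : a < b := by
      push_neg at h
      have := h (by exact_mod_cast b.zero_le)
      omega
    rw [Nat.choose_eq_zero_of_lt hba]
    simp

lemma intChoose_neg (a b : ℤ) (h : b < 0) : intChoose a b = 0 := by
  unfold intChoose
  split_ifs with h'
  · exact absurd h'.1 (not_le.mpr h)
  · rfl

lemma intChoose_not_le (a b : ℤ) (h : a < b) : intChoose a b = 0 := by
  unfold intChoose
  split_ifs with h'
  · exact absurd h'.2 (not_le.mpr h)
  · rfl

lemma fact1 (m k : ℕ) :
    ((m : ℤ) + k) * intChoose ((m : ℤ) + k - 1) m = k * intChoose ((m : ℤ) + k) m := by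
  cases k with
  | zero =>
    rw [intChoose_not_le ((m : ℤ) + ((0 : ℕ) : ℤ) - 1) m (by push_cast; omega)]
    push_cast
    ring
  | succ j =>
    have h1 : ((m : ℤ) + ((j + 1 : ℕ) : ℤ) - 1) = ((m + j : ℕ) : ℤ) := by push_cast; ring
    have h2 : ((m : ℤ) + ((j + 1 : ℕ) : ℤ)) = ((m + (j + 1) : ℕ) : ℤ) := by push_cast; ring
    rw [h1, h2, intChoose_nat, intChoose_nat]
    have hs : (m + j).choose m = (m + j).choose j := by
      have h := Nat.choose_symm (show m ≤ m + j by omega)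
      rw [show m + j - m = j by omega] at h
      exact h.symm
    have hs2 : (m + (j + 1)).choose m = (m + j + 1).choose (j + 1) := by
      have h := Nat.choose_symm (show m ≤ m + j + 1 by omega)
      rw [show m + j + 1 - m = j + 1 by omega] at h
      rw [show m + (j + 1) = m + j + 1 by omega]
      exact h.symm
    have hnat : (m + j + 1) * (m + j).choose j = (m + j + 1).choose (j + 1) * (j + 1) := by
      simpa [Nat.succ_eq_add_one] using Nat.add_one_mul_choose_eq (m + j) j
    rw [hs, hs2]
    have hz : ((m + j + 1 : ℕ) : ℤ) * ((m + j).choose j : ℤ) =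
        ((m + j + 1).choose (j + 1) : ℤ) * ((j + 1 : ℕ) : ℤ) := by exact_mod_cast hnat
    push_cast at hz ⊢
    linear_combination hz

lemma fact2 (m n k : ℕ) :
    ((n : ℤ) - k) * intChoose ((m : ℤ) + 2 * n) ((n : ℤ) - k) =
      ((m : ℤ) + n + k + 1) * intChoose ((m : ℤ) + 2 * n) ((n : ℤ) - k - 1) := by
  rcases lt_or_ge k n with hk | hk
  · set j : ℕ := n - k - 1 with hj
    have hnk1 : ((n : ℤ) - k - 1) = ((j : ℕ) : ℤ) := by omega
    have hnk : ((n : ℤ) - k) = ((j + 1 : ℕ) : ℤ) := by push_cast; omega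
    have ha : ((m : ℤ) + 2 * n) = ((m + 2 * n : ℕ) : ℤ) := by push_cast; ring
    rw [hnk1, hnk, ha, intChoose_nat, intChoose_nat]
    have hnat := Nat.choose_succ_right_eq (m + 2 * n) j
    rw [show m + 2 * n - j = m + n + k + 1 by omega] at hnat
    have hz : ((m + 2 * n).choose (j + 1) : ℤ) * ((j + 1 : ℕ) : ℤ) =
        ((m + 2 * n).choose j : ℤ) * ((m + n + k + 1 : ℕ) : ℤ) := by exact_mod_cast hnat
    push_cast at hz ⊢
    linear_combination hz
  · rw [intChoose_neg _ _ (show (n : ℤ) - k - 1 < 0 by omega)]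
    rcases eq_or_lt_of_le hk with heq | hlt
    · have hz : (n : ℤ) - k = 0 := by omega
      rw [hz]
      ring
    · rw [intChoose_neg _ _ (show (n : ℤ) - k < 0 by omega)]
      ring

theorem stmt0 (m n : ℕ) (hn : 1 ≤ n) :
    ∑ k ∈ Finset.range (n + 1),
      (-1 : ℤ) ^ k *
        (intChoose ((m : ℤ) + k) m + intChoose ((m : ℤ) + k - 1) m) *
        intChoose ((m : ℤ) + 2 * n) ((n : ℤ) - k) = 0 := by
  set H : ℕ → ℤ := fun k =>
    (-1 : ℤ) ^ k * ((m : ℤ) + n + k) * intChoose ((m : ℤ) + k - 1) m *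
      intChoose ((m : ℤ) + 2 * n) ((n : ℤ) - k) with hH
  have key : ∀ k : ℕ,
      (n : ℤ) * ((-1 : ℤ) ^ k *
        (intChoose ((m : ℤ) + k) m + intChoose ((m : ℤ) + k - 1) m) *
        intChoose ((m : ℤ) + 2 * n) ((n : ℤ) - k)) = H k - H (k + 1) := by
    intro k
    have h1 := fact1 m k
    have h2 := fact2 m n k
    simp only [hH]
    have hc1 : ((m : ℤ) + ((k + 1 : ℕ) : ℤ) - 1) = (m : ℤ) + k := by push_cast; ring
    have hc2 : ((n : ℤ) - ((k + 1 : ℕ) : ℤ)) = (n : ℤ) - k - 1 := by push_cast; ring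
    have hc3 : (((k + 1 : ℕ)) : ℤ) = (k : ℤ) + 1 := by push_cast; ring
    rw [hc1, hc2, hc3, pow_succ]
    set A := intChoose ((m : ℤ) + k) m
    set B := intChoose ((m : ℤ) + k - 1) m
    set C0 := intChoose ((m : ℤ) + 2 * n) ((n : ℤ) - k)
    set C1 := intChoose ((m : ℤ) + 2 * n) ((n : ℤ) - k - 1)
    linear_combination ((-1 : ℤ) ^ k * (-C0)) * h1 + ((-1 : ℤ) ^ k * A) * h2
  have hsum : (n : ℤ) * ∑ k ∈ Finset.range (n + 1),
      (-1 : ℤ) ^ k *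
        (intChoose ((m : ℤ) + k) m + intChoose ((m : ℤ) + k - 1) m) *
        intChoose ((m : ℤ) + 2 * n) ((n : ℤ) - k) = H 0 - H (n + 1) := by
    rw [Finset.mul_sum]
    rw [Finset.sum_congr rfl (fun k _ => key k)]
    exact Finset.sum_range_sub' H (n + 1)
  have hH0 : H 0 = 0 := by
    simp only [hH]
    rw [intChoose_not_le ((m : ℤ) + ((0 : ℕ) : ℤ) - 1) m (by push_cast; omega)]
    ring
  have hHn : H (n + 1) = 0 := by
    simp only [hH]
    rw [intChoose_neg ((m : ℤ) + 2 * n) ((n : ℤ) - ((n + 1 : ℕ) : ℤ)) (by push_cast; omega)]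
    ring
  rw [hH0, hHn, sub_zero] at hsum
  have hne : (n : ℤ) ≠ 0 := by exact_mod_cast (by omega : n ≠ 0)
  exact (mul_eq_zero.mp hsum).resolve_left hne
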